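/- arXiv:2006.10107 — 4 statements merged into one kernel-verified Lean document; each statement's English description precedes it below -/
import Mathlib

section
/- Let θ > 0, p = 1 − e^{−θ}, and ψ(t) = −log(1 − p·e^{−t})/θ (Frank generator). Let h ≥ 0 and set c = ψ(h). Then the tilted generator ψ̃(t) = ψ(t+h)/ψ(h) equals −log(1 − p̃·e^{−t})/θ̃ with θ̃ = θ·c and p̃ = 1 − e^{−θc}, i.e. the tilted Frank generator is again a Frank generator with parameter θ·ψ(h). -/
/-- The tilted Frank generator is again a Frank generator with parameter `θ·ψ(h)`. -/
theorem stmt_5 (θ : ℝ) (hθ : 0 < θ) (p : ℝ) (hp : p = 1 - Real.exp (-θ))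
    (ψ : ℝ → ℝ) (hψ : ∀ s, ψ s = -Real.log (1 - p * Real.exp (-s)) / θ)
    (h : ℝ) (hh : 0 ≤ h) (c : ℝ) (hc : c = ψ h) :
    ∀ s, 0 ≤ s →
      ψ (s + h) / ψ h
        = -Real.log (1 - (1 - Real.exp (-(θ * c))) * Real.exp (-s)) / (θ * c) := by
  intro s hs
  have hp1 : p < 1 := by rw [hp]; have := Real.exp_pos (-θ); linarith
  have hp0 : 0 < p := by
    rw [hp]
    have : Real.exp (-θ) < 1 := Real.exp_lt_one_iff.mpr (by linarith)
    linarith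
  have hA : 0 < 1 - p * Real.exp (-h) := by
    have h1 : Real.exp (-h) ≤ 1 := Real.exp_le_one_iff.mpr (by linarith)
    nlinarith [Real.exp_pos (-h)]
  have hkey : Real.exp (-(θ * c)) = 1 - p * Real.exp (-h) := by
    rw [hc, hψ h]
    have : -(θ * (-Real.log (1 - p * Real.exp (-h)) / θ)) =
        Real.log (1 - p * Real.exp (-h)) := by
      field_simp
    rw [this, Real.exp_log hA]
  have harg : 1 - (1 - Real.exp (-(θ * c))) * Real.exp (-s)
      = 1 - p * Real.exp (-(s + h)) := by
    rw [hkey]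
    have : Real.exp (-(s + h)) = Real.exp (-s) * Real.exp (-h) := by
      rw [← Real.exp_add]; ring_nf
    rw [this]; ring
  rw [harg, hψ (s + h), hψ h, ← hψ h, ← hc]
  rw [div_div]
end

section
/- Let C(u) = min{u_1,...,u_d} be the comonotonicity copula and t ∈ (0,1]^d. Then the right-truncated copula C_t(u) = C({C⁻¹[C(t)u_j; t_{−j}]}_j)/C(t) equals min{u_1,...,u_d} for all u ∈ [0,1]^d, where C⁻¹[y; t_{−j}] denotes the generalized inverse y ↦ inf{x : C(x;t_{−j}) ≥ y} of the section x ↦ C(t_1,...,t_{j−1},x,t_{j+1},...,t_d). -/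
/-- The right truncation of the comonotonicity copula is the comonotonicity
copula, with the generalized inverse `C⁻¹[y;t_{−j}] = inf{x : C(x;t_{−j}) ≥ y}`. -/
theorem stmt_11 (d : ℕ) (hd : 0 < d) (C : (Fin d → ℝ) → ℝ)
    (hC : ∀ u, C u = ⨅ j, u j)
    (t : Fin d → ℝ) (ht : ∀ j, t j ∈ Set.Ioc (0:ℝ) 1)
    (Cinv : Fin d → ℝ → ℝ)
    (hCinv : ∀ j y, Cinv j y = sInf {x : ℝ | y ≤ C (Function.update t j x)})
    (u : Fin d → ℝ) (hu : ∀ j, u j ∈ Set.Icc (0:ℝ) 1) :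
    C (fun j => Cinv j (C t * u j)) / C t = ⨅ j, u j := by
  haveI : Nonempty (Fin d) := ⟨⟨0, hd⟩⟩
  have hCt_le : ∀ i, C t ≤ t i := fun i => by
    rw [hC]; exact ciInf_le (Finite.bddBelow_range _) i
  have hCt_pos : 0 < C t := by
    obtain ⟨i, hi⟩ := exists_eq_ciInf_of_finite (f := t)
    rw [hC, ← hi] at *
    exact (ht i).1
  have key : ∀ j, Cinv j (C t * u j) = C t * u j := by
    intro j
    have hy : ∀ i, C t * u j ≤ t i := fun i =>
      le_trans (by nlinarith [(hu j).1, (hu j).2]) (hCt_le i)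
    rw [hCinv]
    have : {x : ℝ | C t * u j ≤ C (Function.update t j x)} = Set.Ici (C t * u j) := by
      ext x
      simp only [Set.mem_setOf_eq, Set.mem_Ici, hC]
      constructor
      · intro h
        have := le_trans h (ciInf_le (Finite.bddBelow_range _) j)
        simpa using this
      · intro h
        refine le_ciInf fun i => ?_
        rcases eq_or_ne i j with rfl | hij
        · simpa using h
        · rw [hC] at hy
          simp [Function.update_of_ne hij, hy i]
    rw [this, csInf_Ici]
  simp only [key]
  simp only [hC]
  rw [hC] at hCt_pos
  rw [← Real.mul_iInf_of_nonneg hCt_pos.le, mul_div_cancel_left₀ _ hCt_pos.ne']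
end

section
/- Let ψ be a continuous strictly decreasing Archimedean generator and h ≥ 0, and suppose both limits L = lim_{s→∞} ψ(2s+h)/ψ(s+h) and λ = lim_{s→∞} ψ(2s)/ψ(s) exist, as well as lim_{s→∞} ψ(s)/ψ(s+h/2). Then L ≥ λ, i.e. right truncation cannot decrease the coefficient of lower tail dependence of an Archimedean copula. -/
/-- Right truncation cannot decrease the coefficient of lower tail dependence
of an Archimedean copula. -/
theorem stmt_14 (ψ : ℝ → ℝ)
    (hcont : ContinuousOn ψ (Set.Ici 0)) (hanti : StrictAntiOn ψ (Set.Ici 0))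
    (hψ0 : ψ 0 = 1) (hmem : ∀ x, 0 ≤ x → ψ x ∈ Set.Ioc (0:ℝ) 1)
    (h : ℝ) (hh : 0 ≤ h) (L lam M : ℝ)
    (hL : Filter.Tendsto (fun s => ψ (2*s + h) / ψ (s + h)) Filter.atTop (nhds L))
    (hlam : Filter.Tendsto (fun s => ψ (2*s) / ψ s) Filter.atTop (nhds lam))
    (hM : Filter.Tendsto (fun s => ψ s / ψ (s + h/2)) Filter.atTop (nhds M)) :
    lam ≤ L := by
  have hshift : Filter.Tendsto (fun s : ℝ => s + h/2) Filter.atTop Filter.atTop :=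
    Filter.tendsto_atTop_add_const_right _ _ Filter.tendsto_id
  have h1 : Filter.Tendsto (fun s => ψ (2*(s + h/2)) / ψ (s + h/2)) Filter.atTop (nhds lam) :=
    hlam.comp hshift
  have h2 : Filter.Tendsto (fun s => ψ (s + h/2) / ψ ((s + h/2) + h/2)) Filter.atTop (nhds M) :=
    hM.comp hshift
  have hprod := h1.mul h2
  have heq : ∀ᶠ s in Filter.atTop,
      (fun s => (ψ (2*(s + h/2)) / ψ (s + h/2)) * (ψ (s + h/2) / ψ ((s + h/2) + h/2))) s
        = ψ (2*s + h) / ψ (s + h) := by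
    filter_upwards [Filter.eventually_ge_atTop (0:ℝ)] with s hs
    have hmid : (0:ℝ) ≤ s + h/2 := by linarith
    have hne : ψ (s + h/2) ≠ 0 := ne_of_gt (hmem _ hmid).1
    have e1 : 2*(s + h/2) = 2*s + h := by ring
    have e2 : (s + h/2) + h/2 = s + h := by ring
    rw [e1, e2, div_mul_div_comm, mul_comm (ψ (2*s + h)) (ψ (s + h/2)), mul_div_mul_left _ _ hne]
  have hLM : Filter.Tendsto (fun s => ψ (2*s + h) / ψ (s + h)) Filter.atTop (nhds (lam * M)) :=
    hprod.congr' heq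
  have hLeq : L = lam * M := tendsto_nhds_unique hL hLM
  have hlam0 : 0 ≤ lam := by
    refine ge_of_tendsto hlam ?_
    filter_upwards [Filter.eventually_ge_atTop (0:ℝ)] with s hs
    exact le_of_lt (div_pos (hmem _ (by linarith)).1 (hmem _ hs).1)
  have hM1 : 1 ≤ M := by
    refine ge_of_tendsto hM ?_
    filter_upwards [Filter.eventually_ge_atTop (0:ℝ)] with s hs
    have hmid : (0:ℝ) ≤ s + h/2 := by linarith
    have hle : ψ (s + h/2) ≤ ψ s := by
      rcases eq_or_lt_of_le (by linarith : s ≤ s + h/2) with he | hlt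
      · rw [← he]
      · exact le_of_lt (hanti hs hmid hlt)
    exact (one_le_div (hmem _ hmid).1).2 hle
  calc lam = lam * 1 := (mul_one lam).symm
    _ ≤ lam * M := by nlinarith
    _ = L := hLeq.symm
end

section
/- Let C be the nested Archimedean copula C(u) = ψ_0(Σ_{s=1}^S ψ_0⁻¹[C_s(u_s)]) with C_s(u_s) = ψ_s(Σ_j ψ_s⁻¹[u_{sj}]), let t ∈ (0,1]^d with C(t) > 0, and let C_t be the right-truncated nested Archimedean copula at t. Then for any sector s̃ and index j̃, setting all arguments except u_{s̃j̃} equal to 1 yields C_t(1,...,1,u_{s̃j̃},1,...,1) = u_{s̃j̃}; i.e. C_t has standard uniform univariate margins. -/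
/-- The right-truncated nested Archimedean copula has standard uniform
univariate margins: plugging `1` into all arguments except the `(s0,j0)`-th
one (which equals `v`) yields `v`. -/
theorem stmt_19 (S : ℕ) (dim : Fin S → ℕ)
    (ψ0 ψ0inv : ℝ → ℝ) (ψ ψinv : Fin S → ℝ → ℝ)
    (hψ0anti : StrictAnti ψ0) (hψanti : ∀ s, StrictAnti (ψ s))
    (h0l : Function.LeftInverse ψ0inv ψ0) (h0r : Function.RightInverse ψ0inv ψ0)
    (hl : ∀ s, Function.LeftInverse (ψinv s) (ψ s))
    (hr : ∀ s, Function.RightInverse (ψinv s) (ψ s))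
    (t : (s : Fin S) → Fin (dim s) → ℝ) (ht : ∀ s j, t s j ∈ Set.Ioc (0:ℝ) 1)
    (Cs : Fin S → ℝ) (hCs : ∀ s, Cs s = ψ s (∑ j, ψinv s (t s j)))
    (Ct : ℝ) (hCtdef : Ct = ψ0 (∑ s, ψ0inv (Cs s))) (hCt : 0 < Ct)
    (s0 : Fin S) (j0 : Fin (dim s0)) (v : ℝ) (hv : v ∈ Set.Icc (0:ℝ) 1)
    (u : (s : Fin S) → Fin (dim s) → ℝ)
    (husj : u s0 j0 = v)
    (hu1 : ∀ s j, ¬(s = s0 ∧ HEq j j0) → u s j = 1) :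
    ψ0 (∑ s, ψ0inv (ψ s ((∑ j, ψinv s (ψ0 (ψ0inv (Ct * u s j) - ψ0inv Ct + ψ0inv (Cs s))))
        - ((dim s : ℝ) - 1) * ψinv s (Cs s)))) / Ct = v := by
  have key : ∀ s : Fin S,
      ψ0inv (ψ s ((∑ j, ψinv s (ψ0 (ψ0inv (Ct * u s j) - ψ0inv Ct + ψ0inv (Cs s))))
        - ((dim s : ℝ) - 1) * ψinv s (Cs s)))
      = ψ0inv (Cs s) + (if s = s0 then ψ0inv (Ct * v) - ψ0inv Ct else 0) := by
    intro s
    by_cases hs : s = s0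
    · subst hs
      rw [if_pos rfl]
      have hsum : (∑ j, ψinv s (ψ0 (ψ0inv (Ct * u s j) - ψ0inv Ct + ψ0inv (Cs s))))
          = ψinv s (ψ0 (ψ0inv (Ct * v) - ψ0inv Ct + ψ0inv (Cs s)))
            + ((dim s : ℝ) - 1) * ψinv s (Cs s) := by
        rw [← Finset.add_sum_erase _ _ (Finset.mem_univ j0), husj]
        congr 1
        have hconst : ∀ j ∈ Finset.univ.erase j0,
            ψinv s (ψ0 (ψ0inv (Ct * u s j) - ψ0inv Ct + ψ0inv (Cs s))) = ψinv s (Cs s) := by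
          intro j hj
          have hj' : j ≠ j0 := Finset.ne_of_mem_erase hj
          rw [hu1 s j (by simp [hj']), mul_one, sub_self, zero_add, h0r (Cs s)]
        rw [Finset.sum_congr rfl hconst, Finset.sum_const,
          Finset.card_erase_of_mem (Finset.mem_univ j0), Finset.card_univ, Fintype.card_fin,
          nsmul_eq_mul, Nat.cast_sub j0.pos, Nat.cast_one]
      rw [hsum]
      ring_nf
      rw [hr s _, h0l _]
    · have hall : ∀ j : Fin (dim s), u s j = 1 := fun j => hu1 s j (by simp [hs])
      have hsum : (∑ j, ψinv s (ψ0 (ψ0inv (Ct * u s j) - ψ0inv Ct + ψ0inv (Cs s))))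
          = (dim s : ℝ) * ψinv s (Cs s) := by
        rw [Finset.sum_congr rfl (fun j _ => by
          rw [hall j, mul_one, sub_self, zero_add, h0r (Cs s)]),
          Finset.sum_const, Finset.card_univ, Fintype.card_fin, nsmul_eq_mul]
      rw [hsum, if_neg hs, add_zero]
      have : (dim s : ℝ) * ψinv s (Cs s) - ((dim s : ℝ) - 1) * ψinv s (Cs s)
          = ψinv s (Cs s) := by ring
      rw [this, hr s (Cs s)]
  rw [Finset.sum_congr rfl (fun s _ => key s), Finset.sum_add_distrib,
    Finset.sum_ite_eq' Finset.univ s0, if_pos (Finset.mem_univ s0)]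
  have hCtinv : ψ0inv Ct = ∑ s, ψ0inv (Cs s) := by rw [hCtdef, h0l]
  have : (∑ s, ψ0inv (Cs s)) + (ψ0inv (Ct * v) - ψ0inv Ct) = ψ0inv (Ct * v) := by
    rw [← hCtinv]; ring
  rw [this, h0r (Ct * v), mul_div_cancel_left₀ _ (ne_of_gt hCt)]
end
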